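/- Let A be a commutative ring with total ring of fractions K_A, let J ⊆ K_A be a finitely generated A-submodule, let F = { f ∈ A : f·J ⊆ A }, and suppose f ∈ F is a non-zerodivisor of A. Set J̃ = f·J ⊆ A and I = (f) + J̃ (the ideal generated by f and J̃). Then the A-subalgebra A[J] of K_A generated by J is equal, inside K_A, to the subalgebra A[I/f] = { a/fᵏ : a ∈ Iᵏ, k ≥ 0 } of A_f. -/

import Mathlib

open Pointwise

/-- Let `A` be a commutative ring with total fraction ring `K_A`, let
`J ⊆ K_A` be a finitely generated `A`-submodule, `F = {f ∈ A | f·J ⊆ A}` its ideal of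
denominators, and `f ∈ F` a non-zerodivisor. Put `J̃ = f·J ⊆ A` and `I = (f) + J̃`.
Then the `A`-subalgebra `A[J] ⊆ K_A` generated by `J` coincides, inside `K_A`, with
`A[I/f] = {a/fᵏ | a ∈ Iᵏ, k ≥ 0}`. -/
theorem adjoin_fractional_ideal_eq_affine_modification {A : Type*} [CommRing A]
    (J : Submodule A (FractionRing A)) (hJ : J.FG) (f : A)
    (hreg : f ∈ nonZeroDivisors A)
    (hden : ∀ x ∈ J, f • x ∈ (1 : Submodule A (FractionRing A))) :
    (Algebra.adjoin A (J : Set (FractionRing A)) : Set (FractionRing A)) =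
      {x : FractionRing A | ∃ (k : ℕ), ∃ a ∈
          ((Ideal.span {f} ⊔
            Submodule.comap (Algebra.linearMap A (FractionRing A)) (f • J) : Ideal A)) ^ k,
        (algebraMap A (FractionRing A) f) ^ k * x = algebraMap A (FractionRing A) a} := by
  set K := FractionRing A
  set φ := algebraMap A K with hφ
  set I : Ideal A := Ideal.span {f} ⊔
      Submodule.comap (Algebra.linearMap A K) (f • J) with hI
  have hfI : f ∈ I := Ideal.mem_sup_left (Ideal.subset_span rfl)
  -- elements of I become f times an element of the adjoin
  have base : ∀ i ∈ I, ∃ s ∈ Algebra.adjoin A (J : Set K), φ i = φ f * s := by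
    intro i hi
    rw [hI, Submodule.mem_sup] at hi
    obtain ⟨p, hp, q, hq, rfl⟩ := hi
    rw [Ideal.mem_span_singleton] at hp
    obtain ⟨r, rfl⟩ := hp
    rw [Submodule.mem_comap] at hq
    obtain ⟨j, hj, hjq⟩ := Set.mem_smul_set.mp hq
    refine ⟨φ r + j, ?_, ?_⟩
    · exact Subalgebra.add_mem _ (Subalgebra.algebraMap_mem _ r)
        (Algebra.subset_adjoin hj)
    · have : (Algebra.linearMap A K) q = f • j := hjq.symm
      simp only [Algebra.linearMap_apply] at this
      rw [map_add, map_mul, this, Algebra.smul_def, mul_add, mul_comm (φ f) (φ r)]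
  ext x
  simp only [Set.mem_setOf_eq, SetLike.mem_coe]
  constructor
  · intro hx
    induction hx using Algebra.adjoin_induction with
    | mem y hy =>
        obtain ⟨a, ha⟩ := Submodule.mem_one.mp (hden y hy)
        refine ⟨1, a, ?_, ?_⟩
        · rw [pow_one, hI]
          refine Ideal.mem_sup_right ?_
          rw [Submodule.mem_comap]
          simp only [Algebra.linearMap_apply, ha]
          convert Submodule.smul_mem_pointwise_smul y f J hy using 1
        · rw [pow_one, ha, Algebra.smul_def]
    | algebraMap r =>
        exact ⟨0, r, by simp [Ideal.one_eq_top], by simp; rfl⟩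
    | add y z hy hz ihy ihz =>
        obtain ⟨k, a, ha, hea⟩ := ihy
        obtain ⟨l, b, hb, heb⟩ := ihz
        refine ⟨k + l, a * f ^ l + b * f ^ k, ?_, ?_⟩
        · refine Ideal.add_mem _ ?_ ?_
          · rw [pow_add]; exact Ideal.mul_mem_mul ha (Ideal.pow_mem_pow hfI l)
          · rw [pow_add, mul_comm (I ^ k)]
            exact Ideal.mul_mem_mul hb (Ideal.pow_mem_pow hfI k)
        · have h1 : φ f ^ (k + l) * (y + z) =
              φ f ^ l * (φ f ^ k * y) + φ f ^ k * (φ f ^ l * z) := by ring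
          rw [h1, hea, heb, map_add, map_mul, map_mul, map_pow, map_pow]
          ring
    | mul y z hy hz ihy ihz =>
        obtain ⟨k, a, ha, hea⟩ := ihy
        obtain ⟨l, b, hb, heb⟩ := ihz
        refine ⟨k + l, a * b, by rw [pow_add]; exact Ideal.mul_mem_mul ha hb, ?_⟩
        have h1 : φ f ^ (k + l) * (y * z) = (φ f ^ k * y) * (φ f ^ l * z) := by ring
        rw [h1, hea, heb, map_mul]
  · rintro ⟨k, a, ha, heq⟩
    -- key: image of I^k is f^k times the adjoin
    have key : ∀ (k : ℕ) (a : A), a ∈ I ^ k →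
        ∃ t ∈ Algebra.adjoin A (J : Set K), φ a = φ f ^ k * t := by
      intro k
      induction k with
      | zero =>
          intro a _
          exact ⟨φ a, Subalgebra.algebraMap_mem _ a, by simp⟩
      | succ k ih =>
          intro a ha
          rw [pow_succ] at ha
          refine Submodule.mul_induction_on ha ?_ ?_
          · intro b hb i hi
            obtain ⟨t, ht, hteq⟩ := ih b hb
            obtain ⟨s, hs, hseq⟩ := base i hi
            refine ⟨t * s, Subalgebra.mul_mem _ ht hs, ?_⟩
            rw [map_mul, hteq, hseq, pow_succ]
            ring
          · rintro u v ⟨t, ht, hteq⟩ ⟨s, hs, hseq⟩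
            refine ⟨t + s, Subalgebra.add_mem _ ht hs, ?_⟩
            rw [map_add, hteq, hseq, mul_add]
    obtain ⟨t, ht, hteq⟩ := key k a ha
    have hu : IsUnit (φ f) :=
      IsLocalization.map_units (M := nonZeroDivisors A) K ⟨f, hreg⟩
    have : φ f ^ k * x = φ f ^ k * t := by rw [heq, hteq]
    have hx : x = t := (hu.pow k).mul_left_cancel this
    rw [hx]; exact ht
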